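/- Let (X,μ,T) be an ergodic ℤ^d-system and let (α,U) be a ℤ^D-valued partial cocycle over it with μ(U) > 0, which is bounded: there is a finite constant C such that |α(v,x)|_1 ≤ C|v|_1 for μ-a.e. x ∈ U ∩ T^{-v}U, for every v ∈ ℤ^d. Then there exists a measurable cocycle σ : ℤ^d × X → ℤ^D over T and a finite constant C' such that for every v ∈ ℤ^d, σ(v,x) = α(v,x) for μ-a.e. x ∈ U ∩ T^{-v}U, and |σ(v,x)|_1 ≤ C'|v|_1 for μ-a.e. x ∈ X. -/

import Mathlib

open MeasureTheory

/-- The ℓ¹-norm of a vector in ℤ^d. -/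
def l1norm {d : ℕ} (v : Fin d → ℤ) : ℕ := ∑ i, (v i).natAbs

namespace Stmt7

lemma l1_zero {d : ℕ} : l1norm (0 : Fin d → ℤ) = 0 := by simp [l1norm]

lemma l1_neg {d : ℕ} (v : Fin d → ℤ) : l1norm (-v) = l1norm v := by
  simp [l1norm]

lemma l1_sub_comm {d : ℕ} (u v : Fin d → ℤ) : l1norm (u - v) = l1norm (v - u) := by
  rw [← l1_neg (u - v), neg_sub]

lemma l1_add_le {d : ℕ} (u v : Fin d → ℤ) :
    (l1norm (u + v) : ℤ) ≤ (l1norm u : ℤ) + (l1norm v : ℤ) := by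
  have h : l1norm (u + v) ≤ l1norm u + l1norm v := by
    rw [l1norm, l1norm, l1norm, ← Finset.sum_add_distrib]
    exact Finset.sum_le_sum fun i _ => Int.natAbs_add_le _ _
  exact_mod_cast h

lemma l1_sub_le {d : ℕ} (u v w : Fin d → ℤ) :
    (l1norm (u - w) : ℤ) ≤ (l1norm (u - v) : ℤ) + (l1norm (v - w) : ℤ) := by
  have h : u - w = (u - v) + (v - w) := by abel
  rw [h]; exact l1_add_le _ _

lemma abs_le_l1 {D : ℕ} (s : Fin D → ℤ) (i : Fin D) : |s i| ≤ (l1norm s : ℤ) := by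
  have h : (s i).natAbs ≤ l1norm s :=
    Finset.single_le_sum (f := fun j => (s j).natAbs) (fun _ _ => Nat.zero_le _)
      (Finset.mem_univ i)
  calc |s i| = ((s i).natAbs : ℤ) := (Int.abs_eq_natAbs _)
    _ ≤ (l1norm s : ℤ) := by exact_mod_cast h

/-- an enumeration of `ℤ^d` starting at `0`. -/
noncomputable def enum (d : ℕ) : ℕ → (Fin d → ℤ)
  | 0 => 0
  | n + 1 => (Encodable.decode (α := Fin d → ℤ) n).getD 0

lemma enum_surj {d : ℕ} (v : Fin d → ℤ) : ∃ n, enum d n = v :=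
  ⟨Encodable.encode v + 1, by simp [enum]⟩

variable {d D : ℕ} {X : Type*}

open Classical in
/-- measurable version of a partial cocycle -/
noncomputable def alpha' (T : (Fin d → ℤ) → X → X) (U : Set X)
    (α : (Fin d → ℤ) → X → (Fin D → ℤ)) (v : Fin d → ℤ) (x : X) : Fin D → ℤ :=
  if x ∈ U ∧ T v x ∈ U then α v x else 0

/-- index of the first enumerated group element moving `x` into `U` -/
noncomputable def nIdx (T : (Fin d → ℤ) → X → X) (U : Set X) (x : X) : ℕ :=
  sInf {n | T (enum d n) x ∈ U}

/-- anchor vector -/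
noncomputable def anch (T : (Fin d → ℤ) → X → X) (U : Set X) (x : X) : Fin d → ℤ :=
  enum d (nIdx T U x)

/-- the partial cocycle as seen from the anchor of `x` -/
noncomputable def hfun (T : (Fin d → ℤ) → X → X) (U : Set X)
    (α : (Fin d → ℤ) → X → (Fin D → ℤ)) (x : X) (u : Fin d → ℤ) : Fin D → ℤ :=
  alpha' T U α (u - anch T U x) (T (anch T U x) x)

/-- the set of values entering the McShane-type extension -/
def FSet (T : (Fin d → ℤ) → X → X) (U : Set X)
    (α : (Fin d → ℤ) → X → (Fin D → ℤ)) (C₁ : ℕ) (i : Fin D) (v : Fin d → ℤ) (x : X) :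
    Set ℤ :=
  {m | ∃ u, T u x ∈ U ∧ m = hfun T U α x u i - (C₁ : ℤ) * (l1norm (v - u) : ℤ)}

/-- integer-valued Lipschitz extension of the partial cocycle along the orbit of `x` -/
noncomputable def Ffun (T : (Fin d → ℤ) → X → X) (U : Set X)
    (α : (Fin d → ℤ) → X → (Fin D → ℤ)) (C₁ : ℕ) (i : Fin D) (v : Fin d → ℤ) (x : X) : ℤ :=
  sSup (FSet T U α C₁ i v x)

/-- the set of points whose orbit meets `U` and where the partial cocycle is Lipschitz -/
def Good (T : (Fin d → ℤ) → X → X) (U : Set X)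
    (α : (Fin d → ℤ) → X → (Fin D → ℤ)) (C₁ : ℕ) : Set X :=
  {x | (∃ u, T u x ∈ U) ∧ ∀ u w : Fin d → ℤ, T u x ∈ U → T w x ∈ U → ∀ i,
    |hfun T U α x u i - hfun T U α x w i| ≤ (C₁ : ℤ) * (l1norm (u - w) : ℤ)}

/-- transfer term between the anchors of `x` and of `T w x` -/
noncomputable def Kf (T : (Fin d → ℤ) → X → X) (U : Set X)
    (α : (Fin d → ℤ) → X → (Fin D → ℤ)) (x : X) (w : Fin d → ℤ) : Fin D → ℤ :=
  alpha' T U α (anch T U (T w x) + w - anch T U x) (T (anch T U x) x)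

open Classical in
/-- the extended cocycle -/
noncomputable def sig (T : (Fin d → ℤ) → X → X) (U : Set X)
    (α : (Fin d → ℤ) → X → (Fin D → ℤ)) (C₁ : ℕ) (v : Fin d → ℤ) (x : X) : Fin D → ℤ :=
  if x ∈ Good T U α C₁ then fun i => Ffun T U α C₁ i v x - Ffun T U α C₁ i 0 x else 0

end Stmt7

open Stmt7

set_option maxHeartbeats 4000000 in
theorem stmt7 {d D : ℕ} {X : Type*} [MeasurableSpace X] [StandardBorelSpace X]
    (μ : Measure X) [IsProbabilityMeasure μ]
    -- a measurable μ-preserving action T of ℤ^d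
    (T : (Fin d → ℤ) → X → X) (hT0 : T 0 = id)
    (hTadd : ∀ v w : Fin d → ℤ, T (v + w) = T v ∘ T w)
    (hTmp : ∀ v : Fin d → ℤ, MeasurePreserving (T v) μ μ)
    -- ergodicity
    (herg : ∀ A : Set X, MeasurableSet A →
      (∀ v : Fin d → ℤ, μ (symmDiff (T v ⁻¹' A) A) = 0) → μ A = 0 ∨ μ A = 1)
    -- a ℤ^D-valued partial cocycle (α, U) with μ(U) > 0
    (U : Set X) (hU : MeasurableSet U) (hUpos : 0 < μ U)
    (α : (Fin d → ℤ) → X → (Fin D → ℤ))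
    (hαmeas : ∀ (v : Fin d → ℤ) (h : Fin D → ℤ),
      MeasurableSet {x : X | x ∈ U ∧ T v x ∈ U ∧ α v x = h})
    (hαcoc : ∀ (v w : Fin d → ℤ) (x : X), x ∈ U → T w x ∈ U → T (v + w) x ∈ U →
      α (v + w) x = α v (T w x) + α w x)
    -- boundedness of the partial cocycle
    (C : ℝ)
    (hbdd : ∀ v : Fin d → ℤ, ∀ᵐ x ∂μ, (x ∈ U ∧ T v x ∈ U) →
      (l1norm (α v x) : ℝ) ≤ C * (l1norm v : ℝ)) :
    -- there is a bounded full cocycle extending α a.e.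
    ∃ (σ : (Fin d → ℤ) → X → (Fin D → ℤ)) (C' : ℝ),
      (∀ (v : Fin d → ℤ) (h : Fin D → ℤ), MeasurableSet {x : X | σ v x = h}) ∧
      (∀ (v w : Fin d → ℤ) (x : X), σ (v + w) x = σ v (T w x) + σ w x) ∧
      (∀ v : Fin d → ℤ, ∀ᵐ x ∂μ, (x ∈ U ∧ T v x ∈ U) → σ v x = α v x) ∧
      (∀ v : Fin d → ℤ, ∀ᵐ x ∂μ, (l1norm (σ v x) : ℝ) ≤ C' * (l1norm v : ℝ)) := by
  classical
  set C₁ : ℕ := ⌈max C 0⌉₊ with hC₁def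
  have hC₁ : C ≤ (C₁ : ℝ) := le_trans (le_max_left _ _) (Nat.le_ceil _)
  have hTm : ∀ c : Fin d → ℤ, Measurable (T c) := fun c => (hTmp c).measurable
  have hTT : ∀ (u w : Fin d → ℤ) (x : X), T u (T w x) = T (u + w) x := by
    intro u w x; rw [hTadd]; rfl
  have hT0x : ∀ x : X, T 0 x = x := fun x => by rw [hT0]; rfl
  -- anchor basics
  have hanch_mem : ∀ x : X, (∃ u, T u x ∈ U) → T (anch T U x) x ∈ U := by
    rintro x ⟨u, hu⟩
    obtain ⟨n, hn⟩ := enum_surj u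
    have hne : {n | T (enum d n) x ∈ U}.Nonempty := ⟨n, by simp only [Set.mem_setOf_eq, hn]; exact hu⟩
    exact Nat.sInf_mem hne
  have hanch_U : ∀ x ∈ U, anch T U x = 0 := by
    intro x hx
    have h0 : 0 ∈ {n | T (enum d n) x ∈ U} := by
      show T (enum d 0) x ∈ U
      show T 0 x ∈ U
      rw [hT0x]; exact hx
    have hz : nIdx T U x = 0 := Nat.sInf_eq_zero.mpr (Or.inl h0)
    show enum d (nIdx T U x) = 0
    rw [hz]; rfl
  -- alpha' basics
  have hA_eq : ∀ (v : Fin d → ℤ) (x : X), x ∈ U → T v x ∈ U →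
      alpha' T U α v x = α v x := by
    intro v x hx hvx; exact if_pos ⟨hx, hvx⟩
  have hA_zero : ∀ x ∈ U, alpha' T U α 0 x = 0 := by
    intro x hx
    have hx0 : T (0 : Fin d → ℤ) x ∈ U := by rw [hT0x]; exact hx
    have h := hαcoc 0 0 x hx hx0 (by rw [zero_add]; exact hx0)
    rw [zero_add, hT0x] at h
    have hz : α (0 : Fin d → ℤ) x = 0 := by
      have := h.symm
      rwa [add_eq_left] at this
    rw [hA_eq 0 x hx hx0, hz]
  have hA_coc : ∀ (v w : Fin d → ℤ) (x : X), x ∈ U → T w x ∈ U → T (v + w) x ∈ U →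
      alpha' T U α (v + w) x = alpha' T U α v (T w x) + alpha' T U α w x := by
    intro v w x hx hw hvw
    rw [hA_eq _ _ hx hvw, hA_eq _ _ hw (by rw [hTT]; exact hvw), hA_eq _ _ hx hw]
    exact hαcoc v w x hx hw hvw
  -- difference formula for hfun
  have hh_sub : ∀ (x : X), (∃ u, T u x ∈ U) → ∀ u w : Fin d → ℤ, T u x ∈ U → T w x ∈ U →
      hfun T U α x u = alpha' T U α (u - w) (T w x) + hfun T U α x w := by
    intro x hx u w hu hw
    have hax := hanch_mem x hx
    have h1 : T (w - anch T U x) (T (anch T U x) x) ∈ U := by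
      rw [hTT, sub_add_cancel]; exact hw
    have h2 : T ((u - w) + (w - anch T U x)) (T (anch T U x) x) ∈ U := by
      rw [hTT, sub_add_sub_cancel, sub_add_cancel]; exact hu
    have key := hA_coc (u - w) (w - anch T U x) (T (anch T U x) x) hax h1 h2
    rw [sub_add_sub_cancel] at key
    show alpha' T U α (u - anch T U x) (T (anch T U x) x) = _
    rw [key, hTT, sub_add_cancel]
    rfl
  -- shift formula for hfun
  have hh_shift : ∀ (x : X) (w : Fin d → ℤ), (∃ u', T u' x ∈ U) →
      ∀ u : Fin d → ℤ, T u (T w x) ∈ U →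
      hfun T U α (T w x) u = hfun T U α x (u + w) - Kf T U α x w := by
    intro x w hx u hu
    have hx' : ∃ u', T u' (T w x) ∈ U := ⟨u, hu⟩
    have hax := hanch_mem x hx
    have hax' := hanch_mem (T w x) hx'
    have e0 : T (anch T U (T w x)) (T w x) = T (anch T U (T w x) + w) x := hTT _ _ _
    have h1 : T (anch T U (T w x) + w - anch T U x) (T (anch T U x) x) ∈ U := by
      rw [hTT, sub_add_cancel, ← e0]; exact hax'
    have h2 : T ((u - anch T U (T w x)) + (anch T U (T w x) + w - anch T U x))
        (T (anch T U x) x) ∈ U := by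
      rw [hTT]
      have e : u - anch T U (T w x) + (anch T U (T w x) + w - anch T U x) + anch T U x
          = u + w := by abel
      rw [e, ← hTT]; exact hu
    have key := hA_coc (u - anch T U (T w x)) (anch T U (T w x) + w - anch T U x)
      (T (anch T U x) x) hax h1 h2
    have e1 : (u - anch T U (T w x)) + (anch T U (T w x) + w - anch T U x)
        = (u + w) - anch T U x := by abel
    rw [e1] at key
    have e2 : T (anch T U (T w x) + w - anch T U x) (T (anch T U x) x)
        = T (anch T U (T w x)) (T w x) := by
      rw [hTT, sub_add_cancel, e0]
    rw [e2] at key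
    show alpha' T U α (u - anch T U (T w x)) (T (anch T U (T w x)) (T w x)) = _
    show _ = alpha' T U α ((u + w) - anch T U x) (T (anch T U x) x) - Kf T U α x w
    rw [key]
    show _ = _ + Kf T U α x w - Kf T U α x w
    abel
  -- Good is invariant
  have hGood_inv : ∀ x ∈ Good T U α C₁, ∀ w : Fin d → ℤ, T w x ∈ Good T U α C₁ := by
    rintro x ⟨⟨u₀, hu₀⟩, hlip⟩ w
    refine ⟨⟨u₀ - w, by rw [hTT, sub_add_cancel]; exact hu₀⟩, ?_⟩
    intro u u' hu hu' i
    have h1 := hh_shift x w ⟨u₀, hu₀⟩ u hu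
    have h2 := hh_shift x w ⟨u₀, hu₀⟩ u' hu'
    have e1 : hfun T U α (T w x) u i - hfun T U α (T w x) u' i
        = hfun T U α x (u + w) i - hfun T U α x (u' + w) i := by
      rw [h1, h2]; simp only [Pi.sub_apply]; ring
    rw [e1]
    have hu2 : T (u + w) x ∈ U := by rw [← hTT]; exact hu
    have hu'2 : T (u' + w) x ∈ U := by rw [← hTT]; exact hu'
    have h3 := hlip (u + w) (u' + w) hu2 hu'2 i
    have e2 : u + w - (u' + w) = u - u' := by abel
    rwa [e2] at h3
  -- FSet basics
  have hFne : ∀ x : X, (∃ u, T u x ∈ U) → ∀ (i : Fin D) (v : Fin d → ℤ),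
      (FSet T U α C₁ i v x).Nonempty := by
    intro x hx i v
    exact ⟨_, anch T U x, hanch_mem x hx, rfl⟩
  have hFbdd : ∀ x ∈ Good T U α C₁, ∀ (i : Fin D) (v : Fin d → ℤ),
      BddAbove (FSet T U α C₁ i v x) := by
    rintro x ⟨hxne, hlip⟩ i v
    have hax := hanch_mem x hxne
    refine ⟨hfun T U α x (anch T U x) i + (C₁ : ℤ) * (l1norm (v - anch T U x) : ℤ), ?_⟩
    rintro m ⟨u, hu, rfl⟩
    have h1 := (abs_le.mp (hlip u (anch T U x) hu hax i)).2
    have h3 : (l1norm (u - anch T U x) : ℤ)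
        ≤ (l1norm (u - v) : ℤ) + (l1norm (v - anch T U x) : ℤ) := l1_sub_le u v (anch T U x)
    have h4 : (l1norm (u - v) : ℤ) = (l1norm (v - u) : ℤ) := by rw [l1_sub_comm]
    have hC₁0 : (0 : ℤ) ≤ (C₁ : ℤ) := Int.natCast_nonneg _
    nlinarith [mul_le_mul_of_nonneg_left h3 hC₁0]
  have hFmem : ∀ x ∈ Good T U α C₁, ∀ (i : Fin D) (v : Fin d → ℤ),
      Ffun T U α C₁ i v x ∈ FSet T U α C₁ i v x := by
    intro x hx i v
    exact Int.csSup_mem (hFne x hx.1 i v) (hFbdd x hx i v)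
  -- F agrees with hfun on return times
  have hFU : ∀ x ∈ Good T U α C₁, ∀ (i : Fin D) (u : Fin d → ℤ), T u x ∈ U →
      Ffun T U α C₁ i u x = hfun T U α x u i := by
    intro x hxG i u hu
    apply le_antisymm
    · apply csSup_le (hFne x hxG.1 i u)
      rintro m ⟨u', hu', rfl⟩
      have h1 := (abs_le.mp (hxG.2 u' u hu' hu i)).2
      rw [show l1norm (u' - u) = l1norm (u - u') from l1_sub_comm u' u] at h1
      linarith
    · have hm : hfun T U α x u i - (C₁ : ℤ) * (l1norm (u - u) : ℤ) ∈ FSet T U α C₁ i u x :=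
        ⟨u, hu, rfl⟩
      have e : (l1norm (u - u : Fin d → ℤ) : ℤ) = 0 := by
        rw [sub_self, l1_zero]; rfl
      have := le_csSup (hFbdd x hxG i u) hm
      rw [e, mul_zero, sub_zero] at this
      exact this
  -- F is Lipschitz in v
  have hFlip : ∀ x ∈ Good T U α C₁, ∀ (i : Fin D) (v v' : Fin d → ℤ),
      Ffun T U α C₁ i v x ≤ Ffun T U α C₁ i v' x + (C₁ : ℤ) * (l1norm (v - v') : ℤ) := by
    intro x hxG i v v'
    obtain ⟨u, hu, he⟩ := hFmem x hxG i v
    have h2 : hfun T U α x u i - (C₁ : ℤ) * (l1norm (v' - u) : ℤ) ≤ Ffun T U α C₁ i v' x :=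
      le_csSup (hFbdd x hxG i v') ⟨u, hu, rfl⟩
    have h3 : (l1norm (v' - u) : ℤ) ≤ (l1norm (v' - v) : ℤ) + (l1norm (v - u) : ℤ) :=
      l1_sub_le v' v u
    have h4 : (l1norm (v' - v) : ℤ) = (l1norm (v - v') : ℤ) := by rw [l1_sub_comm]
    have hC₁0 : (0 : ℤ) ≤ (C₁ : ℤ) := Int.natCast_nonneg _
    rw [he]
    nlinarith [mul_le_mul_of_nonneg_left h3 hC₁0]
  -- F equivariance
  have hFequiv : ∀ x ∈ Good T U α C₁, ∀ (w : Fin d → ℤ) (i : Fin D) (v : Fin d → ℤ),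
      Ffun T U α C₁ i v (T w x) = Ffun T U α C₁ i (v + w) x - Kf T U α x w i := by
    intro x hxG w i v
    have hxG' := hGood_inv x hxG w
    apply le_antisymm
    · apply csSup_le (hFne _ hxG'.1 i v)
      rintro m ⟨u, hu, rfl⟩
      have hsh := hh_shift x w hxG.1 u hu
      have hm2 : hfun T U α x (u + w) i - (C₁ : ℤ) * (l1norm ((v + w) - (u + w)) : ℤ)
          ∈ FSet T U α C₁ i (v + w) x := ⟨u + w, by rw [← hTT]; exact hu, rfl⟩
      have h2 := le_csSup (hFbdd x hxG i (v + w)) hm2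
      have e : (v + w) - (u + w) = v - u := by abel
      rw [e] at h2
      have h2' : hfun T U α x (u + w) i - (C₁ : ℤ) * (l1norm (v - u) : ℤ)
          ≤ Ffun T U α C₁ i (v + w) x := h2
      rw [hsh]
      simp only [Pi.sub_apply]
      linarith
    · rw [sub_le_iff_le_add]
      apply csSup_le (hFne x hxG.1 i (v + w))
      rintro m ⟨u', hu', rfl⟩
      have hu : T (u' - w) (T w x) ∈ U := by rw [hTT, sub_add_cancel]; exact hu'
      have hsh := hh_shift x w hxG.1 (u' - w) hu
      rw [sub_add_cancel] at hsh
      have hm2 : hfun T U α (T w x) (u' - w) i - (C₁ : ℤ) * (l1norm (v - (u' - w)) : ℤ)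
          ∈ FSet T U α C₁ i v (T w x) := ⟨u' - w, hu, rfl⟩
      have h2 := le_csSup (hFbdd (T w x) hxG' i v) hm2
      have e2 : v - (u' - w) = (v + w) - u' := by abel
      rw [hsh, e2] at h2
      simp only [Pi.sub_apply] at h2
      have h2' : hfun T U α x u' i - Kf T U α x w i - (C₁ : ℤ) * (l1norm ((v + w) - u') : ℤ)
          ≤ Ffun T U α C₁ i v (T w x) := h2
      linarith
  -- cocycle identity
  have hsig_coc : ∀ (v w : Fin d → ℤ) (x : X),
      sig T U α C₁ (v + w) x = sig T U α C₁ v (T w x) + sig T U α C₁ w x := by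
    intro v w x
    by_cases hxG : x ∈ Good T U α C₁
    · have hxG' := hGood_inv x hxG w
      funext i
      simp only [sig, if_pos hxG, if_pos hxG', Pi.add_apply]
      rw [hFequiv x hxG w i v, hFequiv x hxG w i 0, zero_add]
      ring
    · have hxG' : T w x ∉ Good T U α C₁ := by
        intro hc
        have h := hGood_inv _ hc (-w)
        rw [hTT, neg_add_cancel, hT0x] at h
        exact hxG h
      simp [sig, hxG, hxG']
  -- measurability of level sets of alpha'
  have hDom : ∀ c : Fin d → ℤ, MeasurableSet {z : X | z ∈ U ∧ T c z ∈ U} := by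
    intro c
    have e : {z : X | z ∈ U ∧ T c z ∈ U} = U ∩ T c ⁻¹' U := rfl
    rw [e]; exact hU.inter ((hTm c) hU)
  have hAlev : ∀ (c : Fin d → ℤ) (i : Fin D) (m : ℤ),
      MeasurableSet {z : X | alpha' T U α c z i = m} := by
    intro c i m
    have heq : {z : X | alpha' T U α c z i = m} =
        ({z : X | z ∈ U ∧ T c z ∈ U} ∩
          ⋃ (g : Fin D → ℤ) (_ : g i = m), {z : X | z ∈ U ∧ T c z ∈ U ∧ α c z = g}) ∪
        ({z : X | z ∈ U ∧ T c z ∈ U}ᶜ ∩ (if (0 : ℤ) = m then Set.univ else ∅)) := by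
      ext z
      constructor
      · intro h
        by_cases hz : z ∈ U ∧ T c z ∈ U
        · refine (Set.mem_union _ _ _).mpr (Or.inl ⟨hz, ?_⟩)
          refine Set.mem_iUnion.mpr ⟨α c z, Set.mem_iUnion.mpr ⟨?_, hz.1, hz.2, rfl⟩⟩
          have h' : alpha' T U α c z i = m := h
          rwa [show alpha' T U α c z = α c z from if_pos hz] at h'
        · refine (Set.mem_union _ _ _).mpr (Or.inr ⟨hz, ?_⟩)
          have h' : alpha' T U α c z i = m := h
          rw [show alpha' T U α c z = 0 from if_neg hz] at h'
          have h0 : (0 : ℤ) = m := h'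
          rw [if_pos h0]; trivial
      · intro h
        rcases (Set.mem_union _ _ _).mp h with ⟨hz, hmem⟩ | ⟨hz, hif⟩
        · obtain ⟨g, hg⟩ := Set.mem_iUnion.mp hmem
          obtain ⟨hgi, hmem2⟩ := Set.mem_iUnion.mp hg
          obtain ⟨_, _, hgz⟩ := hmem2
          show alpha' T U α c z i = m
          have hz' : z ∈ U ∧ T c z ∈ U := hz
          rw [show alpha' T U α c z = α c z from if_pos hz', hgz]; exact hgi
        · show alpha' T U α c z i = m
          have hz' : ¬ (z ∈ U ∧ T c z ∈ U) := hz
          split_ifs at hif with h0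
          · rw [show alpha' T U α c z = 0 from if_neg hz']; exact h0
          · exact absurd hif (Set.notMem_empty z)
    rw [heq]
    refine ((hDom c).inter (MeasurableSet.iUnion fun g =>
      MeasurableSet.iUnion fun _ => hαmeas c g)).union ((hDom c).compl.inter ?_)
    split_ifs
    · exact MeasurableSet.univ
    · exact MeasurableSet.empty
  have hNlev : ∀ n : ℕ, MeasurableSet {x : X | nIdx T U x = n} := by
    intro n
    have heq : {x : X | nIdx T U x = n} =
        (T (enum d n) ⁻¹' U ∩ ⋂ (m : ℕ) (_ : m < n), (T (enum d m) ⁻¹' U)ᶜ) ∪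
          (if n = 0 then ⋂ m : ℕ, (T (enum d m) ⁻¹' U)ᶜ else ∅) := by
      ext x
      constructor
      · intro h
        have h' : nIdx T U x = n := h
        by_cases hne : {k : ℕ | T (enum d k) x ∈ U}.Nonempty
        · refine (Set.mem_union _ _ _).mpr (Or.inl ⟨?_, ?_⟩)
          · have hmem : T (enum d (nIdx T U x)) x ∈ U := Nat.sInf_mem hne
            rw [h'] at hmem; exact hmem
          · refine Set.mem_iInter.mpr fun m => Set.mem_iInter.mpr fun hm => ?_
            have hm' : m < nIdx T U x := by rw [h']; exact hm
            exact Nat.notMem_of_lt_sInf hm'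
        · refine (Set.mem_union _ _ _).mpr (Or.inr ?_)
          have hS : {k : ℕ | T (enum d k) x ∈ U} = ∅ :=
            Set.not_nonempty_iff_eq_empty.mp hne
          have h0 : nIdx T U x = 0 := by
            show sInf {k : ℕ | T (enum d k) x ∈ U} = 0
            rw [hS]; exact Nat.sInf_empty
          rw [if_pos (by rw [← h', h0])]
          refine Set.mem_iInter.mpr fun m => ?_
          intro hmem
          exact (Set.eq_empty_iff_forall_notMem.mp hS) m hmem
      · intro h
        rcases (Set.mem_union _ _ _).mp h with ⟨h1, h2⟩ | h3
        · show nIdx T U x = n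
          have hle : nIdx T U x ≤ n := Nat.sInf_le h1
          rcases eq_or_lt_of_le hle with he | hlt
          · exact he
          · exfalso
            have hmem : T (enum d (nIdx T U x)) x ∈ U :=
              Nat.sInf_mem (s := {k : ℕ | T (enum d k) x ∈ U}) ⟨n, h1⟩
            exact (Set.mem_iInter.mp (Set.mem_iInter.mp h2 _) hlt) hmem
        · by_cases h0 : n = 0
          · rw [if_pos h0] at h3
            have hS : {k : ℕ | T (enum d k) x ∈ U} = ∅ := by
              ext k
              simp only [Set.mem_setOf_eq, Set.mem_empty_iff_false, iff_false]
              exact Set.mem_iInter.mp h3 k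
            show nIdx T U x = n
            rw [h0]
            show sInf {k : ℕ | T (enum d k) x ∈ U} = 0
            rw [hS]; exact Nat.sInf_empty
          · rw [if_neg h0] at h3
            exact absurd h3 (Set.notMem_empty x)
    rw [heq]
    refine (((hTm _) hU).inter (MeasurableSet.iInter fun m =>
      MeasurableSet.iInter fun _ => ((hTm _) hU).compl)).union ?_
    split_ifs
    · exact MeasurableSet.iInter fun m => ((hTm _) hU).compl
    · exact MeasurableSet.empty
  have hhlev : ∀ (u : Fin d → ℤ) (i : Fin D) (m : ℤ),
      MeasurableSet {x : X | hfun T U α x u i = m} := by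
    intro u i m
    have heq : {x : X | hfun T U α x u i = m} =
        ⋃ n : ℕ, ({x : X | nIdx T U x = n} ∩
          T (enum d n) ⁻¹' {z : X | alpha' T U α (u - enum d n) z i = m}) := by
      ext x
      constructor
      · intro h
        exact Set.mem_iUnion.mpr ⟨nIdx T U x, rfl, h⟩
      · intro h
        obtain ⟨n, hn, h2⟩ := Set.mem_iUnion.mp h
        have hn' : nIdx T U x = n := hn
        show alpha' T U α (u - anch T U x) (T (anch T U x) x) i = m
        have ha : anch T U x = enum d n := by
          show enum d (nIdx T U x) = enum d n
          rw [hn']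
        rw [ha]; exact h2
    rw [heq]
    exact MeasurableSet.iUnion fun n => (hNlev n).inter ((hTm _) (hAlev _ i m))
  have hhmeas : ∀ (u : Fin d → ℤ) (i : Fin D), Measurable (fun x => hfun T U α x u i) :=
    fun u i => measurable_to_countable' fun m => hhlev u i m
  have hGoodMeas : MeasurableSet (Good T U α C₁) := by
    have heq : Good T U α C₁ = (⋃ u : Fin d → ℤ, T u ⁻¹' U) ∩
        ⋂ (u : Fin d → ℤ) (w : Fin d → ℤ) (i : Fin D),
          ((T u ⁻¹' U ∩ T w ⁻¹' U) ∩
            {x : X | ¬ |hfun T U α x u i - hfun T U α x w i|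
              ≤ (C₁ : ℤ) * (l1norm (u - w) : ℤ)})ᶜ := by
      ext x
      constructor
      · rintro ⟨hex, hlip⟩
        refine ⟨Set.mem_iUnion.mpr hex, ?_⟩
        refine Set.mem_iInter.mpr fun u => Set.mem_iInter.mpr fun w =>
          Set.mem_iInter.mpr fun i => ?_
        intro hbad
        exact hbad.2 (hlip u w hbad.1.1 hbad.1.2 i)
      · rintro ⟨hex, h⟩
        refine ⟨Set.mem_iUnion.mp hex, fun u w hu hw i => ?_⟩
        by_contra hc
        exact (Set.mem_iInter.mp (Set.mem_iInter.mp (Set.mem_iInter.mp h u) w) i)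
          ⟨⟨hu, hw⟩, hc⟩
    rw [heq]
    refine (MeasurableSet.iUnion fun u => (hTm u) hU).inter ?_
    refine MeasurableSet.iInter fun u => MeasurableSet.iInter fun w =>
      MeasurableSet.iInter fun i => ?_
    refine ((((hTm u) hU).inter ((hTm w) hU)).inter ?_).compl
    have e : {x : X | ¬ |hfun T U α x u i - hfun T U α x w i|
        ≤ (C₁ : ℤ) * (l1norm (u - w) : ℤ)} =
        (fun x => hfun T U α x u i - hfun T U α x w i) ⁻¹'
          {z : ℤ | ¬ |z| ≤ (C₁ : ℤ) * (l1norm (u - w) : ℤ)} := rfl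
    rw [e]
    exact ((hhmeas u i).sub (hhmeas w i)) ((Set.to_countable _).measurableSet)
  have hFlev : ∀ (i : Fin D) (v : Fin d → ℤ) (m : ℤ),
      MeasurableSet {x : X | x ∈ Good T U α C₁ ∧ Ffun T U α C₁ i v x = m} := by
    intro i v m
    have heq : {x : X | x ∈ Good T U α C₁ ∧ Ffun T U α C₁ i v x = m} =
        Good T U α C₁ ∩
        ((⋃ u : Fin d → ℤ, (T u ⁻¹' U ∩
            {x : X | hfun T U α x u i - (C₁ : ℤ) * (l1norm (v - u) : ℤ) = m})) ∩
          ⋂ u : Fin d → ℤ, ((T u ⁻¹' U) ∩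
            {x : X | ¬ hfun T U α x u i - (C₁ : ℤ) * (l1norm (v - u) : ℤ) ≤ m})ᶜ) := by
      ext x
      constructor
      · rintro ⟨hxG, hF⟩
        refine ⟨hxG, ?_, ?_⟩
        · obtain ⟨u, hu, he⟩ := hFmem x hxG i v
          refine Set.mem_iUnion.mpr ⟨u, hu, ?_⟩
          show hfun T U α x u i - (C₁ : ℤ) * (l1norm (v - u) : ℤ) = m
          rw [← he]; exact hF
        · refine Set.mem_iInter.mpr fun u => ?_
          rintro ⟨hu, hbad⟩
          refine hbad ?_
          rw [← hF]
          exact le_csSup (hFbdd x hxG i v) ⟨u, hu, rfl⟩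
      · rintro ⟨hxG, hex, hub⟩
        obtain ⟨u, hu, he⟩ := Set.mem_iUnion.mp hex
        have he' : hfun T U α x u i - (C₁ : ℤ) * (l1norm (v - u) : ℤ) = m := he
        refine ⟨hxG, le_antisymm ?_ ?_⟩
        · apply csSup_le (hFne x hxG.1 i v)
          rintro m' ⟨u', hu', rfl⟩
          by_contra hc
          exact (Set.mem_iInter.mp hub u') ⟨hu', fun hle => hc hle⟩
        · rw [← he']
          exact le_csSup (hFbdd x hxG i v) ⟨u, hu, rfl⟩
    rw [heq]
    refine hGoodMeas.inter (MeasurableSet.inter ?_ ?_)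
    · refine MeasurableSet.iUnion fun u => ((hTm u) hU).inter ?_
      have e : {x : X | hfun T U α x u i - (C₁ : ℤ) * (l1norm (v - u) : ℤ) = m} =
          (fun x => hfun T U α x u i) ⁻¹'
            {z : ℤ | z - (C₁ : ℤ) * (l1norm (v - u) : ℤ) = m} := rfl
      rw [e]; exact (hhmeas u i) ((Set.to_countable _).measurableSet)
    · refine MeasurableSet.iInter fun u => (((hTm u) hU).inter ?_).compl
      have e : {x : X | ¬ hfun T U α x u i - (C₁ : ℤ) * (l1norm (v - u) : ℤ) ≤ m} =
          (fun x => hfun T U α x u i) ⁻¹'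
            {z : ℤ | ¬ z - (C₁ : ℤ) * (l1norm (v - u) : ℤ) ≤ m} := rfl
      rw [e]; exact (hhmeas u i) ((Set.to_countable _).measurableSet)
  have hsigMeas : ∀ (v : Fin d → ℤ) (g : Fin D → ℤ),
      MeasurableSet {x : X | sig T U α C₁ v x = g} := by
    intro v g
    have heq : {x : X | sig T U α C₁ v x = g} =
        ((⋂ i : Fin D, ⋃ (q : ℤ × ℤ) (_ : q.1 - q.2 = g i),
          ({x : X | x ∈ Good T U α C₁ ∧ Ffun T U α C₁ i v x = q.1} ∩
           {x : X | x ∈ Good T U α C₁ ∧ Ffun T U α C₁ i 0 x = q.2})) ∩ Good T U α C₁) ∪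
        ((Good T U α C₁)ᶜ ∩ (if g = 0 then Set.univ else ∅)) := by
      ext x
      by_cases hxG : x ∈ Good T U α C₁
      · constructor
        · intro h
          have h' : sig T U α C₁ v x = g := h
          rw [show sig T U α C₁ v x
              = fun i => Ffun T U α C₁ i v x - Ffun T U α C₁ i 0 x from if_pos hxG] at h'
          refine (Set.mem_union _ _ _).mpr (Or.inl ⟨?_, hxG⟩)
          refine Set.mem_iInter.mpr fun i => ?_
          refine Set.mem_iUnion.mpr ⟨(Ffun T U α C₁ i v x, Ffun T U α C₁ i 0 x),
            Set.mem_iUnion.mpr ⟨?_, ⟨hxG, rfl⟩, ⟨hxG, rfl⟩⟩⟩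
          exact congrFun h' i
        · intro h
          rcases (Set.mem_union _ _ _).mp h with ⟨hint, _⟩ | ⟨hc, _⟩
          · show sig T U α C₁ v x = g
            rw [show sig T U α C₁ v x
                = fun i => Ffun T U α C₁ i v x - Ffun T U α C₁ i 0 x from if_pos hxG]
            funext i
            obtain ⟨q, hq⟩ := Set.mem_iUnion.mp (Set.mem_iInter.mp hint i)
            obtain ⟨hq1, ⟨⟨_, h1⟩, ⟨_, h2⟩⟩⟩ := Set.mem_iUnion.mp hq
            show Ffun T U α C₁ i v x - Ffun T U α C₁ i 0 x = g i
            rw [h1, h2]; exact hq1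
          · exact absurd hxG hc
      · constructor
        · intro h
          have h' : sig T U α C₁ v x = g := h
          rw [show sig T U α C₁ v x = 0 from if_neg hxG] at h'
          refine (Set.mem_union _ _ _).mpr (Or.inr ⟨hxG, ?_⟩)
          rw [if_pos h'.symm]; trivial
        · intro h
          rcases (Set.mem_union _ _ _).mp h with ⟨_, hG⟩ | ⟨_, hif⟩
          · exact absurd hG hxG
          · show sig T U α C₁ v x = g
            rw [show sig T U α C₁ v x = 0 from if_neg hxG]
            by_cases h0 : g = 0
            · rw [h0]
            · rw [if_neg h0] at hif
              exact absurd hif (Set.notMem_empty x)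
    rw [heq]
    apply MeasurableSet.union
    · apply MeasurableSet.inter _ hGoodMeas
      apply MeasurableSet.iInter
      intro i
      apply MeasurableSet.iUnion
      intro q
      apply MeasurableSet.iUnion
      intro _
      exact (hFlev i v q.1).inter (hFlev i 0 q.2)
    · apply MeasurableSet.inter hGoodMeas.compl
      split_ifs
      · exact MeasurableSet.univ
      · exact MeasurableSet.empty
  -- the set of points whose orbit meets U is conull
  have hAmeas : MeasurableSet {x : X | ∃ u : Fin d → ℤ, T u x ∈ U} := by
    have e : {x : X | ∃ u : Fin d → ℤ, T u x ∈ U} = ⋃ u : Fin d → ℤ, T u ⁻¹' U := by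
      ext x; exact ⟨fun ⟨u, hu⟩ => Set.mem_iUnion.mpr ⟨u, hu⟩,
        fun h => Set.mem_iUnion.mp h⟩
    rw [e]; exact MeasurableSet.iUnion fun u => (hTm u) hU
  have hAinv : ∀ w : Fin d → ℤ, T w ⁻¹' {x : X | ∃ u : Fin d → ℤ, T u x ∈ U}
      = {x : X | ∃ u : Fin d → ℤ, T u x ∈ U} := by
    intro w
    ext x
    simp only [Set.mem_preimage, Set.mem_setOf_eq]
    constructor
    · rintro ⟨u, hu⟩; exact ⟨u + w, by rw [← hTT]; exact hu⟩
    · rintro ⟨u, hu⟩; exact ⟨u - w, by rw [hTT, sub_add_cancel]; exact hu⟩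
  have hAone : μ {x : X | ∃ u : Fin d → ℤ, T u x ∈ U} = 1 := by
    rcases herg _ hAmeas (fun w => by rw [hAinv w, symmDiff_self]; simp) with h0 | h1
    · exfalso
      have hsub : U ⊆ {x : X | ∃ u : Fin d → ℤ, T u x ∈ U} := fun x hx =>
        ⟨0, by rw [hT0x]; exact hx⟩
      have := measure_mono (μ := μ) hsub
      rw [h0] at this
      exact absurd (le_antisymm this zero_le) (ne_of_gt hUpos)
    · exact h1
  have hAae : ∀ᵐ x ∂μ, ∃ u : Fin d → ℤ, T u x ∈ U := by
    rw [ae_iff]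
    have hc := measure_compl hAmeas (measure_ne_top μ _)
    rw [hAone, measure_univ] at hc
    simp only [tsub_self] at hc
    have e : {x : X | ¬ ∃ u : Fin d → ℤ, T u x ∈ U}
        = {x : X | ∃ u : Fin d → ℤ, T u x ∈ U}ᶜ := rfl
    rw [e, hc]
  -- Good is conull
  have hlipae : ∀ᵐ x ∂μ, x ∈ Good T U α C₁ := by
    have h1 : ∀ u w : Fin d → ℤ, ∀ᵐ x ∂μ, (∃ u' : Fin d → ℤ, T u' x ∈ U) →
        T u x ∈ U → T w x ∈ U → ∀ i : Fin D,
        |hfun T U α x u i - hfun T U α x w i| ≤ (C₁ : ℤ) * (l1norm (u - w) : ℤ) := by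
      intro u w
      have h3 : ∀ᵐ x ∂μ, (T w x ∈ U ∧ T (u - w) (T w x) ∈ U) →
          (l1norm (α (u - w) (T w x)) : ℝ) ≤ C * (l1norm (u - w) : ℝ) :=
        (hTmp w).quasiMeasurePreserving.ae (hbdd (u - w))
      filter_upwards [h3] with x hx hex hu hw i
      have hsub := hh_sub x hex u w hu hw
      have hmem : T w x ∈ U ∧ T (u - w) (T w x) ∈ U :=
        ⟨hw, by rw [hTT, sub_add_cancel]; exact hu⟩
      have hreal := hx hmem
      have e : hfun T U α x u i - hfun T U α x w i = α (u - w) (T w x) i := by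
        rw [hsub, hA_eq _ _ hmem.1 hmem.2]
        simp
      rw [e]
      have h5 : (|α (u - w) (T w x) i| : ℝ) ≤ ((C₁ : ℤ) * (l1norm (u - w) : ℤ) : ℤ) := by
        have h6 : (|α (u - w) (T w x) i| : ℝ) ≤ (l1norm (α (u - w) (T w x)) : ℝ) := by
          exact_mod_cast (by exact_mod_cast abs_le_l1 (α (u - w) (T w x)) i :
            ((|α (u - w) (T w x) i| : ℤ) : ℝ) ≤ ((l1norm (α (u - w) (T w x)) : ℤ) : ℝ))
        have h7 : C * (l1norm (u - w) : ℝ) ≤ (C₁ : ℝ) * (l1norm (u - w) : ℝ) :=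
          mul_le_mul_of_nonneg_right hC₁ (by positivity)
        have h8 : (((C₁ : ℤ) * (l1norm (u - w) : ℤ) : ℤ) : ℝ)
            = (C₁ : ℝ) * (l1norm (u - w) : ℝ) := by push_cast; ring
        rw [h8]
        linarith
      exact_mod_cast h5
    have h2 : ∀ᵐ x ∂μ, ∀ u w : Fin d → ℤ, (∃ u' : Fin d → ℤ, T u' x ∈ U) →
        T u x ∈ U → T w x ∈ U → ∀ i : Fin D,
        |hfun T U α x u i - hfun T U α x w i| ≤ (C₁ : ℤ) * (l1norm (u - w) : ℤ) :=
      ae_all_iff.mpr fun u => ae_all_iff.mpr fun w => h1 u w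
    filter_upwards [h2, hAae] with x hx hex
    exact ⟨hex, fun u w hu hw i => hx u w hex hu hw i⟩
  -- agreement with α
  have hagree : ∀ v : Fin d → ℤ, ∀ᵐ x ∂μ, (x ∈ U ∧ T v x ∈ U) →
      sig T U α C₁ v x = α v x := by
    intro v
    filter_upwards [hlipae] with x hxG hm
    obtain ⟨hx, hvx⟩ := hm
    funext i
    have ha0 : anch T U x = 0 := hanch_U x hx
    have hh : ∀ u : Fin d → ℤ, hfun T U α x u = alpha' T U α u x := by
      intro u
      show alpha' T U α (u - anch T U x) (T (anch T U x) x) = alpha' T U α u x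
      rw [ha0, sub_zero, hT0x]
    have hgoal : sig T U α C₁ v x i
        = Ffun T U α C₁ i v x - Ffun T U α C₁ i 0 x := by
      rw [show sig T U α C₁ v x
        = fun i => Ffun T U α C₁ i v x - Ffun T U α C₁ i 0 x from if_pos hxG]
    rw [hgoal, hFU x hxG i v hvx, hFU x hxG i 0 (by rw [hT0x]; exact hx),
      hh v, hh 0, hA_eq _ _ hx hvx, hA_zero x hx]
    simp
  -- boundedness
  refine ⟨sig T U α C₁, (D : ℝ) * (C₁ : ℝ), hsigMeas, hsig_coc, hagree, ?_⟩
  intro v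
  filter_upwards [hlipae] with x hxG
  have hbd : ∀ i : Fin D, |Ffun T U α C₁ i v x - Ffun T U α C₁ i 0 x|
      ≤ (C₁ : ℤ) * (l1norm v : ℤ) := by
    intro i
    have h1 := hFlip x hxG i v 0
    have h2 := hFlip x hxG i 0 v
    rw [show l1norm (v - 0) = l1norm v from by rw [sub_zero]] at h1
    rw [show l1norm (0 - v) = l1norm v from by rw [zero_sub, l1_neg]] at h2
    rw [abs_le]
    constructor <;> linarith
  have hsig_eq : sig T U α C₁ v x
      = fun i => Ffun T U α C₁ i v x - Ffun T U α C₁ i 0 x := if_pos hxG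
  have hZ : (l1norm (sig T U α C₁ v x) : ℤ) ≤ (D : ℤ) * ((C₁ : ℤ) * (l1norm v : ℤ)) := by
    have e1 : (l1norm (sig T U α C₁ v x) : ℤ)
        = ∑ i : Fin D, |sig T U α C₁ v x i| := by
      rw [l1norm]
      push_cast
      refine Finset.sum_congr rfl fun i _ => ?_
      rw [Int.abs_eq_natAbs]
    rw [e1]
    calc ∑ i : Fin D, |sig T U α C₁ v x i|
        ≤ ∑ _i : Fin D, (C₁ : ℤ) * (l1norm v : ℤ) := by
          refine Finset.sum_le_sum fun i _ => ?_
          rw [hsig_eq]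
          exact hbd i
      _ = (D : ℤ) * ((C₁ : ℤ) * (l1norm v : ℤ)) := by
          rw [Finset.sum_const, Finset.card_univ, Fintype.card_fin, nsmul_eq_mul]
  have : ((l1norm (sig T U α C₁ v x) : ℤ) : ℝ)
      ≤ (((D : ℤ) * ((C₁ : ℤ) * (l1norm v : ℤ)) : ℤ) : ℝ) := by exact_mod_cast hZ
  push_cast at this ⊢
  linarith
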